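/- (3-star implies 6-star) Let L be a real number. If the set {λ ∈ E₁ : |λ| = L} has exactly 3 elements, then the set {Λ ∈ E₀ : |Λ| = 3L} has exactly 6 elements. -/

import Mathlib

noncomputable def ω : ℂ := (1 + Real.sqrt 3 * Complex.I) / 2
noncomputable def φ : ℂ := -(1 + ω) / 3
noncomputable def E (j : ℕ) : Set ℂ := {z | ∃ n m : ℤ, z = (n : ℂ) + (m : ℂ) * ω + (j : ℂ) * φ}

lemma h3c : (Real.sqrt 3 : ℂ)^2 = 3 := by
  have : Real.sqrt 3 ^ 2 = 3 := Real.sq_sqrt (by norm_num)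
  exact_mod_cast this

lemma hω2 : ω^2 = ω - 1 := by
  simp only [ω]; field_simp; ring_nf
  rw [Complex.I_sq, h3c]; ring

lemma normSq_lat (x y : ℝ) : Complex.normSq ((x:ℂ) + y*ω) = x^2+x*y+y^2 := by
  have h3 : Real.sqrt 3 ^ 2 = 3 := Real.sq_sqrt (by norm_num)
  simp [ω, Complex.normSq_apply, Complex.add_re, Complex.add_im, Complex.div_re, Complex.div_im]
  ring_nf
  nlinarith [h3]

lemma habs (x y : ℤ) : ‖(x:ℂ)+(y:ℂ)*ω‖^2 = ((x^2+x*y+y^2 : ℤ) : ℝ) := by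
  rw [Complex.sq_norm]; push_cast; exact normSq_lat x y

lemma indep (a b : ℤ) (h : (a:ℂ) + b*ω = 0) : a = 0 ∧ b = 0 := by
  have him := congrArg Complex.im h
  have hre := congrArg Complex.re h
  simp [ω, Complex.add_im, Complex.add_re, Complex.div_im, Complex.div_re, Complex.mul_im, Complex.mul_re] at him hre
  refine ⟨?_, him⟩
  rw [him] at hre
  simpa using hre

lemma absω : ‖ω‖ = 1 := by
  have := habs 0 1
  simp at this
  rcases this with h|h
  · exact h
  · nlinarith [norm_nonneg ω]

lemma ωne : ω ≠ 0 := by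
  intro h
  have := absω
  rw [h] at this
  simp at this

lemma zmod_key (a b : ZMod 9) (h : a^2+a*b+b^2 = 3) :
    ((ZMod.castHom (by norm_num : (3:ℕ) ∣ 9) (ZMod 3)) a = 1 ∧ (ZMod.castHom (by norm_num : (3:ℕ) ∣ 9) (ZMod 3)) b = 1)
    ∨ ((ZMod.castHom (by norm_num : (3:ℕ) ∣ 9) (ZMod 3)) a = 2 ∧ (ZMod.castHom (by norm_num : (3:ℕ) ∣ 9) (ZMod 3)) b = 2) := by
  revert h; revert a b; decide

lemma int_red (x : ℤ) (r : ZMod 3) (hx : (x : ZMod 3) = r) : ∃ a : ℤ, x = 3*a + r.val := by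
  have : ((x - r.val : ℤ) : ZMod 3) = 0 := by
    push_cast
    rw [hx, ZMod.natCast_val, ZMod.cast_id]
    ring
  obtain ⟨a, ha⟩ := (ZMod.intCast_zmod_eq_zero_iff_dvd _ 3).mp this
  exact ⟨a, by omega⟩

theorem three_star_implies_six_star (L : ℝ)
    (h : Set.ncard {z ∈ E 1 | ‖z‖ = L} = 3) :
    Set.ncard {z ∈ E 0 | ‖z‖ = 3 * L} = 6 := by
  set A := {z ∈ E 1 | ‖z‖ = L} with hA
  set B := {z ∈ E 0 | ‖z‖ = 3 * L} with hB
  have hAfin : A.Finite := Set.finite_of_ncard_ne_zero (by omega)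
  have hAne : A.Nonempty := Set.nonempty_of_ncard_ne_zero (by omega)
  obtain ⟨z₀, ⟨⟨n₀, m₀, hz₀⟩, hz₀L⟩⟩ := hAne
  -- the squared radius
  set N : ℤ := (3*n₀-1)^2 + (3*n₀-1)*(3*m₀-1) + (3*m₀-1)^2 with hN
  have h3z : ∀ (n m : ℤ), (3:ℂ) * ((n:ℂ) + m*ω + (1:ℕ)*φ) = ((3*n-1 : ℤ):ℂ) + ((3*m-1:ℤ):ℂ)*ω := by
    intro n m; simp only [φ]; push_cast; ring
  have hLsq : ((N : ℝ)) = 9 * L^2 := by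
    have h1 : (3:ℂ) * z₀ = ((3*n₀-1 : ℤ):ℂ) + ((3*m₀-1:ℤ):ℂ)*ω := by
      rw [hz₀]; exact h3z n₀ m₀
    have h2 := habs (3*n₀-1) (3*m₀-1)
    rw [← h1] at h2
    rw [norm_mul] at h2
    simp [hz₀L] at h2
    rw [hN]; push_cast at h2 ⊢
    nlinarith [h2]
  -- S1 and S2
  set S1 : Set ℂ := (fun z => 3*z) '' A with hS1
  set S2 : Set ℂ := (fun z => 3*ω*z) '' A with hS2
  have hLnn : 0 ≤ L := hz₀L ▸ norm_nonneg z₀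
  -- forward inclusions
  have hS1B : S1 ⊆ B := by
    rintro - ⟨z, ⟨⟨n, m, hz⟩, hzL⟩, rfl⟩
    constructor
    · refine ⟨3*n-1, 3*m-1, ?_⟩
      rw [hz]; simp only [φ]; push_cast; ring
    · rw [norm_mul, hzL]; simp
  have hS2B : S2 ⊆ B := by
    rintro - ⟨z, ⟨⟨n, m, hz⟩, hzL⟩, rfl⟩
    constructor
    · refine ⟨1-3*m, 3*n+3*m-2, ?_⟩
      rw [hz]; simp only [φ]; push_cast
      linear_combination (3*(m:ℂ)-1) * hω2
    · rw [norm_mul, norm_mul, hzL, absω]; simp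
  -- backward inclusion
  have hBsub : B ⊆ S1 ∪ S2 := by
    rintro w ⟨⟨x, y, hw⟩, hwL⟩
    simp only [Nat.cast_zero, zero_mul, add_zero] at hw
    -- norm equation
    have hxy : x^2+x*y+y^2 = N := by
      have h2 := habs x y
      rw [← hw, hwL] at h2
      have : ((x^2+x*y+y^2 : ℤ) : ℝ) = (N : ℝ) := by
        rw [← h2, hLsq]; ring
      exact_mod_cast this
    have hmod : ((x : ZMod 9))^2 + (x:ZMod 9)*(y:ZMod 9) + (y:ZMod 9)^2 = 3 := by
      have hNval : (x^2+x*y+y^2 : ℤ) = 9*(n₀^2+n₀*m₀+m₀^2-n₀-m₀) + 3 := by rw [hxy, hN]; ring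
      have := congrArg (fun t : ℤ => (t : ZMod 9)) hNval
      push_cast at this
      rw [this]
      rw [show ((9:ZMod 9)) = 0 from rfl]
      ring
    have hkey := zmod_key (x : ZMod 9) (y : ZMod 9) hmod
    rw [map_intCast, map_intCast] at hkey
    rcases hkey with ⟨hx1, hy1⟩ | ⟨hx2, hy2⟩
    · -- class (1,1) : w ∈ S2
      obtain ⟨a, ha⟩ := int_red x 1 hx1
      obtain ⟨b, hb⟩ := int_red y 1 hy1
      rw [show ((1:ZMod 3).val : ℤ) = 1 from rfl] at ha hb
      right
      refine ⟨((a+b+1:ℤ):ℂ) + ((-a:ℤ):ℂ)*ω + (1:ℕ)*φ, ⟨⟨a+b+1, -a, rfl⟩, ?_⟩, ?_⟩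
      · -- abs = L
        have heq : (3:ℂ)*ω*(((a+b+1:ℤ):ℂ) + ((-a:ℤ):ℂ)*ω + (1:ℕ)*φ) = w := by
          rw [hw, ha, hb]; simp only [φ]; push_cast
          linear_combination (-(3*(a:ℂ)+1)) * hω2
        have := congrArg (‖·‖) heq
        rw [norm_mul, norm_mul, absω, hwL, Complex.norm_ofNat, mul_one] at this
        linarith
      · show (3:ℂ)*ω*_ = w
        rw [hw, ha, hb]; simp only [φ]; push_cast
        linear_combination (-(3*(a:ℂ)+1)) * hω2
    · -- class (2,2) : w ∈ S1
      obtain ⟨a, ha⟩ := int_red x 2 hx2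
      obtain ⟨b, hb⟩ := int_red y 2 hy2
      rw [show ((2:ZMod 3).val : ℤ) = 2 from rfl] at ha hb
      left
      refine ⟨((a+1:ℤ):ℂ) + ((b+1:ℤ):ℂ)*ω + (1:ℕ)*φ, ⟨⟨a+1, b+1, rfl⟩, ?_⟩, ?_⟩
      · have heq : (3:ℂ)*(((a+1:ℤ):ℂ) + ((b+1:ℤ):ℂ)*ω + (1:ℕ)*φ) = w := by
          rw [hw, ha, hb]; simp only [φ]; push_cast; ring
        have := congrArg (‖·‖) heq
        rw [norm_mul, hwL, Complex.norm_ofNat] at this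
        linarith
      · show (3:ℂ)*_ = w
        rw [hw, ha, hb]; simp only [φ]; push_cast; ring
  have hBeq : B = S1 ∪ S2 := Set.Subset.antisymm hBsub (Set.union_subset hS1B hS2B)
  -- disjointness
  have hdisj : Disjoint S1 S2 := by
    rw [Set.disjoint_left]
    rintro - ⟨z₁, ⟨⟨n, m, hz1⟩, -⟩, rfl⟩ ⟨z₂, ⟨⟨n', m', hz2⟩, -⟩, heq⟩
    have heq' : z₁ = ω * z₂ := by
      have h3 : (3:ℂ) ≠ 0 := by norm_num
      have := mul_left_cancel₀ h3 (show (3:ℂ)*(ω*z₂) = 3*z₁ by linear_combination heq)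
      exact this.symm
    have hkey : ((3*n+3*m'-2 : ℤ):ℂ) + ((3*m-3*n'-3*m'+1:ℤ):ℂ)*ω = 0 := by
      rw [hz1, hz2] at heq'
      simp only [φ] at heq'
      push_cast
      linear_combination 3*heq' + (3*(m':ℂ)-1)*hω2
    obtain ⟨-, h2⟩ := indep _ _ hkey
    omega
  -- injectivity and count
  have hinj1 : Function.Injective (fun z : ℂ => 3*z) := mul_right_injective₀ (by norm_num)
  have hinj2 : Function.Injective (fun z : ℂ => 3*ω*z) := mul_right_injective₀ (by simp [ωne])
  rw [hBeq, Set.ncard_union_eq hdisj (hAfin.image _) (hAfin.image _),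
      Set.ncard_image_of_injective _ hinj1, Set.ncard_image_of_injective _ hinj2, h]
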